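/- Let κ : ℝ → ℝ be continuous with finite limits κ₊ = lim_{x→+∞} κ(x) and κ₋ = lim_{x→−∞} κ(x) satisfying κ₊ κ₋ < 0. (i) If κ₊ > 0 > κ₋, then Ψ₀(x) = (0, exp(−∫₀ˣ κ(s) ds)) is a nonzero C¹ function ℝ → ℂ² satisfying 𝒟Ψ₀ = 0 pointwise, Ψ₀ ∈ L²(ℝ; ℂ²), and for every λ with 0 < λ < min(κ₊, −κ₋) there exists C > 0 such that |Ψ₀(x)| ≤ C e^{−λ|x|} for all x ∈ ℝ. (ii) If κ₊ < 0 < κ₋, the same conclusions hold for Ψ₀(x) = (exp(∫₀ˣ κ(s) ds), 0) with 0 < λ < min(−κ₊, κ₋). In particular, 0 is an L² eigenvalue of the Dirac operator 𝒟 with exponentially decaying eigenfunction whenever κ is of domain-wall type. -/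

import Mathlib

noncomputable section

open Complex Real MeasureTheory Filter

/-- The domain-wall zero mode supported on the `B` sublattice:
`Ψ₀(x) = (0, exp(−∫₀ˣ κ(s) ds))`. -/
def zeroModeB (κ : ℝ → ℝ) (x : ℝ) : ℂ × ℂ :=
  ((0 : ℂ), Complex.exp (((-(∫ s in (0 : ℝ)..x, κ s)) : ℝ) : ℂ))

/-- The domain-wall zero mode supported on the `A` sublattice:
`Ψ₀(x) = (exp(∫₀ˣ κ(s) ds), 0)`. -/
def zeroModeA (κ : ℝ → ℝ) (x : ℝ) : ℂ × ℂ :=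
  (Complex.exp (((∫ s in (0 : ℝ)..x, κ s) : ℝ) : ℂ), (0 : ℂ))

/-- The one-dimensional Dirac equation `𝒟Ψ = 0` pointwise, where
`𝒟Ψ = (3/2)(−iσ₁Ψ′ + κσ₂Ψ)`. -/
def DiracZero (κ : ℝ → ℝ) (Ψ : ℝ → ℂ × ℂ) : Prop :=
  ∀ x : ℝ,
    (3 / 2 : ℂ) * (-I * deriv (fun y => (Ψ y).2) x - I * ((κ x : ℝ) : ℂ) * (Ψ x).2) = 0 ∧
    (3 / 2 : ℂ) * (-I * deriv (fun y => (Ψ y).1) x + I * ((κ x : ℝ) : ℂ) * (Ψ x).1) = 0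

/-- Euclidean norm on `ℂ²`. -/
def enorm2 (v : ℂ × ℂ) : ℝ := Real.sqrt (‖v.1‖ ^ 2 + ‖v.2‖ ^ 2)

section helperlemmas
open Set


lemma integrable_exp_neg_mul_abs' {b : ℝ} (hb : 0 < b) :
    Integrable (fun x : ℝ => Real.exp (-b * |x|)) := by
  have hI : IntegrableOn (fun x : ℝ => Real.exp (-b * |x|)) (Ioi 0) := by
    refine (exp_neg_integrableOn_Ioi 0 hb).congr_fun ?_ measurableSet_Ioi
    intro x hx
    simp [abs_of_pos (mem_Ioi.mp hx)]
  rw [← integrableOn_univ, ← @Iio_union_Ici _ _ (0 : ℝ), integrableOn_union,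
    integrableOn_Ici_iff_integrableOn_Ioi]
  refine ⟨?_, hI⟩
  rw [← (Measure.measurePreserving_neg (volume : Measure ℝ)).integrableOn_comp_preimage
      (Homeomorph.neg ℝ).measurableEmbedding]
  simp only [Function.comp_def, abs_neg, neg_preimage, neg_Iio, neg_zero]
  exact hI

variable {κ : ℝ → ℝ}

lemma hasDerivAt_F (hκ : Continuous κ) (x : ℝ) :
    HasDerivAt (fun u => ∫ s in (0:ℝ)..u, κ s) (κ x) x :=
  intervalIntegral.integral_hasDerivAt_right (hκ.intervalIntegrable _ _)
    (hκ.stronglyMeasurableAtFilter _ _) hκ.continuousAt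

def gB (κ : ℝ → ℝ) (x : ℝ) : ℂ :=
  Complex.exp (((-(∫ s in (0 : ℝ)..x, κ s)) : ℝ) : ℂ)

lemma hasDerivAt_gB (hκ : Continuous κ) (x : ℝ) :
    HasDerivAt (gB κ) (-(κ x : ℂ) * gB κ x) x := by
  have h2 : HasDerivAt (fun u : ℝ => (((-(∫ s in (0:ℝ)..u, κ s)) : ℝ) : ℂ)) (-(κ x : ℂ)) x := by
    have := ((hasDerivAt_F hκ x).neg).ofReal_comp
    simpa using this
  have h3 : HasDerivAt (gB κ) (gB κ x * -(κ x : ℂ)) x := h2.cexp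
  rw [mul_comm] at h3
  exact h3

lemma contDiff_gB (hκ : Continuous κ) : ContDiff ℝ 1 (gB κ) := by
  have hdiff : Differentiable ℝ (gB κ) := fun x => (hasDerivAt_gB hκ x).differentiableAt
  rw [contDiff_one_iff_deriv]
  refine ⟨hdiff, ?_⟩
  have : deriv (gB κ) = fun x => -(κ x : ℂ) * gB κ x := by
    funext x; exact (hasDerivAt_gB hκ x).deriv
  rw [this]
  exact (Complex.continuous_ofReal.comp hκ).neg.mul hdiff.continuous

lemma abs_gB (x : ℝ) : ‖gB κ x‖ = Real.exp (-(∫ s in (0:ℝ)..x, κ s)) := by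
  simp [gB, Complex.norm_exp]

lemma decay_B (hκ : Continuous κ) {κp κm lam : ℝ}
    (hp : Tendsto κ atTop (nhds κp)) (hm : Tendsto κ atBot (nhds κm))
    (h1 : lam < κp) (h2 : κm < -lam) :
    ∃ C > 0, ∀ x : ℝ, Real.exp (-(∫ s in (0:ℝ)..x, κ s)) ≤ C * Real.exp (-lam * |x|) := by
  obtain ⟨R1, hR1⟩ := eventually_atTop.mp (hp.eventually (eventually_ge_nhds h1))
  obtain ⟨R2, hR2⟩ := eventually_atBot.mp (hm.eventually (eventually_le_nhds h2))
  set F : ℝ → ℝ := fun u => ∫ s in (0:ℝ)..u, κ s with hFdef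
  have hFd : Differentiable ℝ F := fun x => (hasDerivAt_F hκ x).differentiableAt
  have hFc : Continuous F := hFd.continuous
  set R : ℝ := max R1 (max (-R2) 0) with hRdef
  have hR0 : 0 ≤ R := le_max_of_le_right (le_max_right _ _)
  have hRR1 : R1 ≤ R := le_max_left _ _
  have hRR2 : -R ≤ R2 := by
    have : -R2 ≤ R := le_max_of_le_right (le_max_left _ _)
    linarith
  set φ : ℝ → ℝ := fun x => Real.exp (-(F x) + lam * |x|) with hφdef
  have hφc : Continuous φ :=
    Real.continuous_exp.comp (hFc.neg.add (continuous_const.mul continuous_abs))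
  obtain ⟨z, hz, hzmax⟩ := isCompact_Icc.exists_isMaxOn
    (Set.nonempty_Icc.mpr (by linarith : -R ≤ R)) hφc.continuousOn
  refine ⟨φ z, Real.exp_pos _, ?_⟩
  have key : ∀ x, φ x ≤ φ z := by
    intro x
    rcases le_total x R with hxR | hxR
    · rcases le_total (-R) x with hxN | hxN
      · exact hzmax ⟨hxN, hxR⟩
      · have hsub : F x + ∫ s in x..(-R), κ s = F (-R) :=
          intervalIntegral.integral_add_adjacent_intervals
            (hκ.intervalIntegrable _ _) (hκ.intervalIntegrable _ _)
        have hint : (∫ s in x..(-R), κ s) ≤ (-R - x) * (-lam) := by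
          have hmono := intervalIntegral.integral_mono_on hxN (hκ.intervalIntegrable _ _)
            (intervalIntegrable_const : IntervalIntegrable (fun _ => -lam) volume x (-R))
            (fun s hs => hR2 s (hs.2.trans hRR2))
          simpa [intervalIntegral.integral_const, smul_eq_mul] using hmono
        have hrw : (-R - x) * (-lam) = lam * R + lam * x := by ring
        have hb : -(F x) + lam * |x| ≤ -(F (-R)) + lam * |(-R)| := by
          have hxabs : |x| = -x := _root_.abs_of_nonpos (by linarith)
          have hRabs : |(-R)| = R := by rw [abs_neg, _root_.abs_of_nonneg hR0]
          rw [hxabs, hRabs]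
          linarith [hsub, hint, hrw]
        calc φ x ≤ φ (-R) := Real.exp_le_exp.mpr hb
          _ ≤ φ z := hzmax ⟨le_refl _, by linarith⟩
    · have hsub : F R + ∫ s in R..x, κ s = F x :=
        intervalIntegral.integral_add_adjacent_intervals
          (hκ.intervalIntegrable _ _) (hκ.intervalIntegrable _ _)
      have hint : (x - R) * lam ≤ ∫ s in R..x, κ s := by
        have hmono := intervalIntegral.integral_mono_on hxR
          (intervalIntegrable_const : IntervalIntegrable (fun _ => lam) volume R x)
          (hκ.intervalIntegrable _ _) (fun s hs => hR1 s (hRR1.trans hs.1))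
        simpa [intervalIntegral.integral_const, smul_eq_mul] using hmono
      have hrw : (x - R) * lam = lam * x - lam * R := by ring
      have hb : -(F x) + lam * |x| ≤ -(F R) + lam * |R| := by
        have hxabs : |x| = x := _root_.abs_of_nonneg (by linarith)
        have hRabs : |R| = R := _root_.abs_of_nonneg hR0
        rw [hxabs, hRabs]
        linarith [hsub, hint, hrw]
      calc φ x ≤ φ R := Real.exp_le_exp.mpr hb
        _ ≤ φ z := hzmax ⟨by linarith, le_refl _⟩
  intro x
  have hsplit : Real.exp (-(F x)) = φ x * Real.exp (-lam * |x|) := by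
    rw [hφdef]
    rw [← Real.exp_add]
    ring_nf
  rw [hsplit]
  exact mul_le_mul_of_nonneg_right (key x) (Real.exp_pos _).le

lemma sq_exp_integrable (hκ : Continuous κ) {κp κm : ℝ}
    (hp : Tendsto κ atTop (nhds κp)) (hm : Tendsto κ atBot (nhds κm))
    (hκp : 0 < κp) (hκm : κm < 0) :
    Integrable (fun x => Real.exp (-(∫ s in (0:ℝ)..x, κ s)) ^ 2) := by
  set μ := min κp (-κm) / 2 with hμ
  have h0 : 0 < min κp (-κm) := lt_min hκp (neg_pos.mpr hκm)
  have hμ0 : 0 < μ := by rw [hμ]; positivity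
  have h1 : μ < κp := by
    have := min_le_left κp (-κm); rw [hμ]; linarith
  have h2 : κm < -μ := by
    have := min_le_right κp (-κm); rw [hμ]; linarith
  obtain ⟨C, hC, hCb⟩ := decay_B hκ hp hm h1 h2
  have hFd : Differentiable ℝ (fun u => ∫ s in (0:ℝ)..u, κ s) :=
    fun x => (hasDerivAt_F hκ x).differentiableAt
  have hcont : Continuous fun x => Real.exp (-(∫ s in (0:ℝ)..x, κ s)) ^ 2 :=
    (Real.continuous_exp.comp hFd.continuous.neg).pow 2
  refine Integrable.mono'
    ((integrable_exp_neg_mul_abs' (by positivity : (0:ℝ) < 2*μ)).const_mul (C^2))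
    hcont.aestronglyMeasurable ?_
  filter_upwards with x
  rw [Real.norm_eq_abs, _root_.abs_of_nonneg (sq_nonneg _)]
  have hb : Real.exp (-(∫ s in (0:ℝ)..x, κ s)) ^ 2 ≤ (C * Real.exp (-μ * |x|)) ^ 2 :=
    pow_le_pow_left₀ (Real.exp_pos _).le (hCb x) 2
  have he : Real.exp (-μ * |x|) ^ 2 = Real.exp (-(2*μ) * |x|) := by
    rw [sq, ← Real.exp_add]; congr 1; ring
  calc Real.exp (-(∫ s in (0:ℝ)..x, κ s)) ^ 2 ≤ (C * Real.exp (-μ * |x|)) ^ 2 := hb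
    _ = C ^ 2 * Real.exp (-(2*μ) * |x|) := by rw [mul_pow, he]

lemma enorm2_B (x : ℝ) : enorm2 (zeroModeB κ x) = Real.exp (-(∫ s in (0:ℝ)..x, κ s)) := by
  have h : enorm2 (zeroModeB κ x) = ‖gB κ x‖ := by
    simp [enorm2, zeroModeB, gB, Real.sqrt_sq (norm_nonneg _)]
  rw [h, abs_gB]

lemma zeroModeA_eq : zeroModeA κ = fun x => (gB (fun s => -κ s) x, (0:ℂ)) := by
  funext x
  simp [zeroModeA, gB, intervalIntegral.integral_neg]

lemma enorm2_A (x : ℝ) : enorm2 (zeroModeA κ x) = Real.exp (∫ s in (0:ℝ)..x, κ s) := by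
  rw [zeroModeA_eq]
  show Real.sqrt (‖gB (fun s => -κ s) x‖ ^ 2 + ‖(0:ℂ)‖ ^ 2) = _
  rw [abs_gB, intervalIntegral.integral_neg, neg_neg, norm_zero]
  norm_num [Real.sqrt_sq (Real.exp_pos _).le]

end helperlemmas

/-- For a continuous domain-wall potential `κ` with limits `κ₊, κ₋` of opposite
signs at `±∞`, zero is an `L²` eigenvalue of the Dirac operator `𝒟` with an explicit,
exponentially decaying eigenfunction supported on one sublattice. -/
theorem domain_wall_zero_mode
    (κ : ℝ → ℝ) (hκ : Continuous κ) (κp κm : ℝ)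
    (hp : Tendsto κ atTop (nhds κp))
    (hm : Tendsto κ atBot (nhds κm))
    (hsign : κp * κm < 0) :
    ((0 < κp ∧ κm < 0) →
      ((∃ x, zeroModeB κ x ≠ 0) ∧ ContDiff ℝ 1 (zeroModeB κ) ∧
        DiracZero κ (zeroModeB κ) ∧
        Integrable (fun x => enorm2 (zeroModeB κ x) ^ 2) ∧
        ∀ lam : ℝ, 0 < lam → lam < min κp (-κm) →
          ∃ C > (0 : ℝ), ∀ x : ℝ, enorm2 (zeroModeB κ x) ≤ C * Real.exp (-lam * |x|))) ∧
    ((κp < 0 ∧ 0 < κm) →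
      ((∃ x, zeroModeA κ x ≠ 0) ∧ ContDiff ℝ 1 (zeroModeA κ) ∧
        DiracZero κ (zeroModeA κ) ∧
        Integrable (fun x => enorm2 (zeroModeA κ x) ^ 2) ∧
        ∀ lam : ℝ, 0 < lam → lam < min (-κp) κm →
          ∃ C > (0 : ℝ), ∀ x : ℝ, enorm2 (zeroModeA κ x) ≤ C * Real.exp (-lam * |x|))) := by
  constructor
  · rintro ⟨hκp, hκm⟩
    refine ⟨⟨0, ?_⟩, ?_, ?_, ?_, ?_⟩
    · simp [zeroModeB, Prod.ext_iff, Complex.exp_ne_zero]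
    · exact (contDiff_const.prodMk (contDiff_gB hκ) :
        ContDiff ℝ 1 fun x => ((0:ℂ), gB κ x))
    · intro x
      constructor
      · have hd : deriv (fun y => (zeroModeB κ y).2) x = -(κ x : ℂ) * gB κ x :=
          (hasDerivAt_gB hκ x).deriv
        rw [hd]
        show (3/2 : ℂ) * (-I * (-(κ x : ℂ) * gB κ x) - I * (κ x : ℂ) * gB κ x) = 0
        ring
      · have hd : deriv (fun y => (zeroModeB κ y).1) x = 0 := by
          simp [zeroModeB]
        rw [hd]
        show (3/2 : ℂ) * (-I * 0 + I * (κ x : ℂ) * 0) = 0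
        ring
    · have := sq_exp_integrable hκ hp hm hκp hκm
      refine this.congr ?_
      filter_upwards with x
      rw [enorm2_B]
    · intro lam hl0 hlt
      rw [lt_min_iff] at hlt
      obtain ⟨C, hC, hCb⟩ := decay_B hκ hp hm hlt.1 (by linarith [hlt.2])
      exact ⟨C, hC, fun x => by rw [enorm2_B]; exact hCb x⟩
  · rintro ⟨hκp, hκm⟩
    have hκ' : Continuous (fun s => -κ s) := hκ.neg
    have hp' : Tendsto (fun s => -κ s) atTop (nhds (-κp)) := hp.neg
    have hm' : Tendsto (fun s => -κ s) atBot (nhds (-κm)) := hm.neg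
    have hκp' : 0 < -κp := neg_pos.mpr hκp
    have hκm' : -κm < 0 := neg_lt_zero.mpr hκm
    have hcomp : (fun y => (zeroModeA κ y).1) = gB (fun s => -κ s) := by
      funext y
      rw [zeroModeA_eq]
    refine ⟨⟨0, ?_⟩, ?_, ?_, ?_, ?_⟩
    · simp [zeroModeA, Prod.ext_iff, Complex.exp_ne_zero]
    · rw [zeroModeA_eq]
      exact (contDiff_gB hκ').prodMk contDiff_const
    · intro x
      constructor
      · have hd : deriv (fun y => (zeroModeA κ y).2) x = 0 := by
          simp [zeroModeA]
        rw [hd]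
        show (3/2 : ℂ) * (-I * 0 - I * (κ x : ℂ) * 0) = 0
        ring
      · have hd : deriv (fun y => (zeroModeA κ y).1) x = (κ x : ℂ) * gB (fun s => -κ s) x := by
          rw [hcomp]
          have := (hasDerivAt_gB hκ' x).deriv
          rw [this]
          push_cast
          ring
        have h1 : (zeroModeA κ x).1 = gB (fun s => -κ s) x := congrFun hcomp x
        rw [hd, h1]
        ring
    · have := sq_exp_integrable hκ' hp' hm' hκp' hκm'
      refine this.congr ?_
      filter_upwards with x
      rw [enorm2_A, intervalIntegral.integral_neg, neg_neg]
    · intro lam hl0 hlt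
      rw [lt_min_iff] at hlt
      obtain ⟨C, hC, hCb⟩ := decay_B hκ' hp' hm' hlt.1 (by linarith [hlt.2])
      refine ⟨C, hC, fun x => ?_⟩
      have := hCb x
      rw [intervalIntegral.integral_neg, neg_neg] at this
      rw [enorm2_A]
      exact this
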